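/- Let k ≥ 1 be an integer, v > 0, and suppose real numbers t ∈ [0, 1/(k·v)], p ≥ 0, and v' < k·v/(k+1) satisfy both v'(1−t) − p ≥ v'(1 − 1/(k·v)) and (k·v/(k+1)) − 1/(k+1) ≥ (k·v/(k+1))(1−t) − p. Then p = 0 and t = 1/(k·v). -/

import Mathlib

/-- The pinning-down argument: the two incentive inequalities force p = 0 and
t = 1/(k·v). -/
theorem pinning_down (k : ℕ) (hk : 1 ≤ k) (v : ℝ) (hv : 0 < v)
    (hkv : 1 ≤ (k:ℝ) * v)
    (t p v' : ℝ)
    (ht0 : 0 ≤ t) (ht1 : t ≤ 1 / ((k:ℝ) * v))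
    (hp : 0 ≤ p)
    (hv'pos : 0 < v') (hv' : v' < (k:ℝ) * v / (k + 1))
    (h1 : v' * (1 - t) - p ≥ v' * (1 - 1 / ((k:ℝ) * v)))
    (h2 : (k:ℝ) * v / (k + 1) - 1 / (k + 1) ≥ ((k:ℝ) * v / (k + 1)) * (1 - t) - p) :
    p = 0 ∧ t = 1 / ((k:ℝ) * v) := by
  have hkv0 : (0:ℝ) < (k:ℝ) * v := lt_of_lt_of_le one_pos hkv
  have hk1 : (0:ℝ) < (k:ℝ) + 1 := by positivity
  have hw : ((k:ℝ) * v / (k + 1)) * (1 / ((k:ℝ) * v)) = 1 / (k + 1) := by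
    field_simp
  have hs : 0 ≤ 1 / ((k:ℝ) * v) - t := by linarith
  have hwv : 0 < (k:ℝ) * v / (k + 1) - v' := by linarith
  have ht : t = 1 / ((k:ℝ) * v) := by
    nlinarith [mul_nonneg hwv.le hs]
  constructor
  · nlinarith
  · exact ht
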